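/- Let (Ω, F) be a measurable space with a filtration (F_t)_{t∈ℝ₊} satisfying ⋁_t F_t ⊆ F. If (ρ_n)_{n∈ℕ} is a sequence of predictable times, then sup_{n∈ℕ} ρ_n is a predictable time. -/

import Mathlib

open MeasureTheory Set
open scoped NNReal ENNReal


variable {Ω : Type*}

/-- A stopping time with respect to the filtration `𝔽`. -/
def IsStopTime {F : MeasurableSpace Ω} (𝔽 : Filtration ℝ≥0 F) (τ : Ω → ℝ≥0∞) : Prop :=
  ∀ t : ℝ≥0, MeasurableSet[𝔽 t] {ω | τ ω ≤ (t : ℝ≥0∞)}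

/-- A predictable time: a stopping time announced by a nondecreasing sequence of
finite stopping times. -/
def IsPredTime {F : MeasurableSpace Ω} (𝔽 : Filtration ℝ≥0 F) (ρ : Ω → ℝ≥0∞) : Prop :=
  IsStopTime 𝔽 ρ ∧ ∃ ρs : ℕ → Ω → ℝ≥0∞,
    (∀ n, IsStopTime 𝔽 (ρs n)) ∧ (∀ n ω, ρs n ω < ⊤) ∧ (∀ n ω, ρs n ω ≤ ρ ω) ∧
    (∀ n ω, 0 < ρ ω → ρs n ω < ρ ω) ∧ (∀ ω, Monotone fun n => ρs n ω) ∧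
    (∀ ω, Filter.Tendsto (fun n => ρs n ω) Filter.atTop (nhds (ρ ω)))

/-- The graph `⟦τ⟧ ⊆ Ω × ℝ₊` of `τ : Ω → [0,∞]`. -/
def graph (τ : Ω → ℝ≥0∞) : Set (Ω × ℝ≥0) := {p | τ p.1 = (p.2 : ℝ≥0∞)}

/-- The stochastic interval `⟦τ, ∞⟦`. -/
def rayFrom (τ : Ω → ℝ≥0∞) : Set (Ω × ℝ≥0) := {p | τ p.1 ≤ (p.2 : ℝ≥0∞)}

/-- The stochastic interval `⟦ρ, τ⟧`. -/
def stInterval (ρ τ : Ω → ℝ≥0∞) : Set (Ω × ℝ≥0) :=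
  {p | ρ p.1 ≤ (p.2 : ℝ≥0∞) ∧ (p.2 : ℝ≥0∞) ≤ τ p.1}

/-- The predictable σ-algebra on `Ω × ℝ₊`. -/
def predictableSigma {F : MeasurableSpace Ω} (𝔽 : Filtration ℝ≥0 F) :
    MeasurableSpace (Ω × ℝ≥0) :=
  MeasurableSpace.generateFrom {s | ∃ ρ, IsPredTime 𝔽 ρ ∧ s = rayFrom ρ}

/-- The optional σ-algebra on `Ω × ℝ₊`. -/
def optionalSigma {F : MeasurableSpace Ω} (𝔽 : Filtration ℝ≥0 F) :
    MeasurableSpace (Ω × ℝ≥0) :=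
  MeasurableSpace.generateFrom {s | ∃ τ, IsStopTime 𝔽 τ ∧ s = rayFrom τ}

/-- The debut of a set `S ⊆ Ω × ℝ₊`. -/
noncomputable def debut (S : Set (Ω × ℝ≥0)) (ω : Ω) : ℝ≥0∞ :=
  ⨅ (t : ℝ≥0) (_ : (ω, t) ∈ S), (t : ℝ≥0∞)

/-- Projection of a subset of `Ω × ℝ₊` onto `Ω`. -/
def projOmega (S : Set (Ω × ℝ≥0)) : Set Ω := Prod.fst '' S

/-- The outer measure `ℙ*` induced by `ℙ`. -/
noncomputable def pstar {F : MeasurableSpace Ω} (P : Measure Ω) (A : Set Ω) : ℝ≥0∞ :=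
  ⨅ (E : Set Ω) (_ : A ⊆ E) (_ : MeasurableSet E), P E

/-- the pointwise supremum of a sequence of predictable times is a
predictable time. -/
theorem isPredTime_iSup {Ω : Type*} {F : MeasurableSpace Ω}
    (𝔽 : Filtration ℝ≥0 F) (ρs : ℕ → Ω → ℝ≥0∞)
    (hρs : ∀ n, IsPredTime 𝔽 (ρs n)) :
    IsPredTime 𝔽 (fun ω => ⨆ n, ρs n ω) := by
  classical
  -- choose announcing sequences
  set seq : ℕ → ℕ → Ω → ℝ≥0∞ := fun n => Classical.choose (hρs n).2 with hseqdef
  have hseq : ∀ n, (∀ k, IsStopTime 𝔽 (seq n k)) ∧ (∀ k ω, seq n k ω < ⊤) ∧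
      (∀ k ω, seq n k ω ≤ ρs n ω) ∧ (∀ k ω, 0 < ρs n ω → seq n k ω < ρs n ω) ∧
      (∀ ω, Monotone fun k => seq n k ω) ∧
      (∀ ω, Filter.Tendsto (fun k => seq n k ω) Filter.atTop (nhds (ρs n ω))) :=
    fun n => Classical.choose_spec (hρs n).2
  have hsup_seq : ∀ n ω, (⨆ k, seq n k ω) = ρs n ω := by
    intro n ω
    exact tendsto_nhds_unique (tendsto_atTop_iSup ((hseq n).2.2.2.2.1 ω))
      ((hseq n).2.2.2.2.2 ω)
  refine ⟨?_, ?_⟩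
  · intro t
    have : {ω | (⨆ n, ρs n ω) ≤ (t : ℝ≥0∞)} = ⋂ n, {ω | ρs n ω ≤ (t : ℝ≥0∞)} := by
      ext ω; simp [iSup_le_iff]
    rw [this]
    exact MeasurableSet.iInter fun n => (hρs n).1 t
  · refine ⟨fun k ω => (Finset.range (k+1)).sup fun n => seq n k ω, ?_, ?_, ?_, ?_, ?_, ?_⟩
    · intro k t
      have : {ω | ((Finset.range (k+1)).sup fun n => seq n k ω) ≤ (t : ℝ≥0∞)}
          = ⋂ n ∈ Finset.range (k+1), {ω | seq n k ω ≤ (t : ℝ≥0∞)} := by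
        ext ω; simp [Finset.sup_le_iff]
      rw [this]
      exact MeasurableSet.biInter (Finset.range (k+1)).countable_toSet
        fun n _ => (hseq n).1 k t
    · intro k ω
      rw [Finset.sup_lt_iff (by simp : (⊥ : ℝ≥0∞) < ⊤)]
      exact fun n _ => (hseq n).2.1 k ω
    · intro k ω
      exact Finset.sup_le fun n _ => le_trans ((hseq n).2.2.1 k ω) (le_iSup (fun n => ρs n ω) n)
    · intro k ω hpos
      rw [Finset.sup_lt_iff hpos]
      intro n _
      rcases eq_or_lt_of_le (zero_le : 0 ≤ ρs n ω) with h0 | h0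
      · calc seq n k ω ≤ ρs n ω := (hseq n).2.2.1 k ω
          _ = 0 := h0.symm
          _ < _ := hpos
      · exact lt_of_lt_of_le ((hseq n).2.2.2.1 k ω h0)
          (le_iSup (fun n => ρs n ω) n)
    · intro ω k l hkl
      refine Finset.sup_le fun n hn => ?_
      have hn' : n ∈ Finset.range (l+1) :=
        Finset.mem_range.mpr (lt_of_lt_of_le (Finset.mem_range.mp hn) (by omega))
      exact le_trans ((hseq n).2.2.2.2.1 ω hkl)
          (Finset.le_sup (f := fun m => seq m l ω) hn')
    · intro ω
      have hmono : Monotone fun k => (Finset.range (k+1)).sup fun n => seq n k ω := by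
        intro k l hkl
        refine Finset.sup_le fun n hn => ?_
        have hn' : n ∈ Finset.range (l+1) :=
          Finset.mem_range.mpr (lt_of_lt_of_le (Finset.mem_range.mp hn) (by omega))
        exact le_trans ((hseq n).2.2.2.2.1 ω hkl)
          (Finset.le_sup (f := fun m => seq m l ω) hn')
      have hsup : (⨆ k, (Finset.range (k+1)).sup fun n => seq n k ω) = ⨆ n, ρs n ω := by
        apply le_antisymm
        · refine iSup_le fun k => Finset.sup_le fun n _ =>
            le_trans ((hseq n).2.2.1 k ω) (le_iSup (fun n => ρs n ω) n)
        · refine iSup_le fun n => ?_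
          rw [← hsup_seq n ω]
          refine iSup_le fun k => ?_
          have h1 : seq n k ω ≤ seq n (max n k) ω := (hseq n).2.2.2.2.1 ω (le_max_right n k)
          have h2 : seq n (max n k) ω ≤ (Finset.range (max n k + 1)).sup
              fun m => seq m (max n k) ω :=
            Finset.le_sup (f := fun m => seq m (max n k) ω) (Finset.mem_range.mpr (Nat.lt_succ_of_le (le_max_left n k)))
          exact le_trans (le_trans h1 h2)
            (le_iSup (fun k => (Finset.range (k+1)).sup fun n => seq n k ω) (max n k))
      show Filter.Tendsto (fun k => (Finset.range (k+1)).sup fun n => seq n k ω)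
        Filter.atTop (nhds (⨆ n, ρs n ω))
      rw [← hsup]
      exact tendsto_atTop_iSup hmono
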